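/- Let C ∈ (-1, 0), let b, b̃ : ℕ → ℝ be finitely supported, and define h(z) = z^2 - z·Σ_{k∈ℕ} b_k·κ_s(z)^k - Σ_{k∈ℕ} b̃_k·κ_s(z)^k, where κ_s(z) = (1 - z^2 + √(z^4 + 2(2C^2-1)z^2 + 1))/(2Cz) with the principal complex square root. Then h is complex-differentiable in a neighborhood of z = -1, and h(-1) = 1 + Σ_{k∈ℕ} b_k - Σ_{k∈ℕ} b̃_k, while the complex derivative satisfies h'(-1) = -(2 + Σ_{k∈ℕ} b_k + (1/C)·Σ_{k∈ℕ} k·(b_k - b̃_k)). -/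

import Mathlib

open Real Complex Filter Topology

private lemma sqrt4C2 (C : ℝ) (hC : C < 0) :
    ((4 * C ^ 2 : ℝ) : ℂ) ^ ((1 : ℂ) / 2) = ((-2 * C : ℝ) : ℂ) := by
  rw [show ((1 : ℂ) / 2) = (((1 : ℝ) / 2 : ℝ) : ℂ) by norm_num,
    ← Complex.ofReal_cpow (by positivity)]
  rw [← Real.sqrt_eq_rpow, show (4 * C ^ 2 : ℝ) = (-2 * C) ^ 2 by ring,
    Real.sqrt_sq (by nlinarith : (0 : ℝ) ≤ -2 * C)]

theorem boundary_function_at_minus_one (C : ℝ) (hC : C ∈ Set.Ioo (-1 : ℝ) 0)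
    (b btil : ℕ →₀ ℝ) :
    let ks : ℂ → ℂ := fun z =>
      (1 - z ^ 2 + (z ^ 4 + 2 * (2 * (C : ℂ) ^ 2 - 1) * z ^ 2 + 1) ^ ((1 : ℂ) / 2)) /
        (2 * (C : ℂ) * z)
    let h : ℂ → ℂ := fun z =>
      z ^ 2 - z * (b.sum fun k bk => (bk : ℂ) * ks z ^ k)
        - (btil.sum fun k bk => (bk : ℂ) * ks z ^ k)
    (∀ᶠ z in 𝓝 (-1 : ℂ), DifferentiableAt ℂ h z) ∧
    h (-1) = 1 + (b.sum fun _ bk => (bk : ℂ)) - (btil.sum fun _ bk => (bk : ℂ)) ∧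
    deriv h (-1) = -(2 + (b.sum fun _ bk => (bk : ℂ))
      + (1 / (C : ℂ)) * ((b.sum fun k bk => (k : ℂ) * bk)
        - (btil.sum fun k bk => (k : ℂ) * bk))) := by
  obtain ⟨hC1, hC0⟩ := hC
  have hCne : (C : ℂ) ≠ 0 := by exact_mod_cast hC0.ne
  intro ks h
  -- value of the inner polynomial at -1
  have hwval : ((-1 : ℂ) ^ 4 + 2 * (2 * (C : ℂ) ^ 2 - 1) * (-1) ^ 2 + 1)
      = ((4 * C ^ 2 : ℝ) : ℂ) := by push_cast; ring
  have hslit : ((-1 : ℂ) ^ 4 + 2 * (2 * (C : ℂ) ^ 2 - 1) * (-1) ^ 2 + 1) ∈ Complex.slitPlane := by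
    rw [hwval]; exact Complex.ofReal_mem_slitPlane.2 (by nlinarith)
  -- derivative of the polynomial at -1
  have hw' : HasDerivAt (fun z : ℂ => z ^ 4 + 2 * (2 * (C : ℂ) ^ 2 - 1) * z ^ 2 + 1)
      (4 * (-1) ^ 3 + 2 * (2 * (C : ℂ) ^ 2 - 1) * (2 * (-1))) (-1) := by
    have h1 := hasDerivAt_pow 4 (-1 : ℂ)
    have h2 := (hasDerivAt_pow 2 (-1 : ℂ)).const_mul (2 * (2 * (C : ℂ) ^ 2 - 1))
    have := (h1.add h2).add_const 1
    refine this.congr_deriv ?_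
    push_cast; ring
  -- sqrt part derivative at -1
  have hsq : HasDerivAt
      (fun z : ℂ => (z ^ 4 + 2 * (2 * (C : ℂ) ^ 2 - 1) * z ^ 2 + 1) ^ ((1 : ℂ) / 2))
      (2 * (C : ℂ)) (-1) := by
    have := hw'.cpow_const (c := (1 : ℂ) / 2) hslit
    refine this.congr_deriv ?_
    rw [hwval, show ((1 : ℂ) / 2 - 1) = -(1 / 2) by ring, Complex.cpow_neg,
      sqrt4C2 C hC0]
    have hne : ((-2 * C : ℝ) : ℂ) ≠ 0 := by
      simp only [ne_eq, Complex.ofReal_eq_zero]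
      intro hh; nlinarith
    field_simp
    push_cast
    ring
  -- numerator derivative
  have hN : HasDerivAt
      (fun z : ℂ => 1 - z ^ 2 + (z ^ 4 + 2 * (2 * (C : ℂ) ^ 2 - 1) * z ^ 2 + 1) ^ ((1 : ℂ) / 2))
      (2 + 2 * (C : ℂ)) (-1) := by
    have h1 : HasDerivAt (fun z : ℂ => 1 - z ^ 2) (2 : ℂ) (-1) := by
      have := (hasDerivAt_pow 2 (-1 : ℂ)).const_sub 1
      refine this.congr_deriv ?_; push_cast; ring
    exact h1.add hsq
  have hNval : (1 - (-1 : ℂ) ^ 2 +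
      ((-1 : ℂ) ^ 4 + 2 * (2 * (C : ℂ) ^ 2 - 1) * (-1) ^ 2 + 1) ^ ((1 : ℂ) / 2))
      = -2 * (C : ℂ) := by
    rw [hwval, sqrt4C2 C hC0]; push_cast; ring
  -- denominator
  have hD : HasDerivAt (fun z : ℂ => 2 * (C : ℂ) * z) (2 * (C : ℂ)) (-1) := by
    simpa using (hasDerivAt_id (-1 : ℂ)).const_mul (2 * (C : ℂ))
  have hDne : 2 * (C : ℂ) * (-1) ≠ 0 := by
    simp [hCne]
  -- derivative of ks at -1
  have hks : HasDerivAt ks (-1 / (C : ℂ)) (-1) := by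
    have := hN.div hD hDne
    refine this.congr_deriv ?_
    rw [hNval]
    field_simp
    ring
  have hksval : ks (-1) = 1 := by
    show (1 - (-1 : ℂ) ^ 2 + _) / _ = 1
    rw [hNval]
    field_simp
  -- sums
  have hS1 : HasDerivAt (fun z => b.sum fun k bk => (bk : ℂ) * ks z ^ k)
      (b.sum fun k bk => (bk : ℂ) * ((k : ℂ) * (-1 / (C : ℂ)))) (-1) := by
    simp only [Finsupp.sum]
    apply HasDerivAt.fun_sum
    intro k _
    have := (hks.pow k).const_mul ((b k : ℝ) : ℂ)
    simpa [hksval] using this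
  have hS2 : HasDerivAt (fun z => btil.sum fun k bk => (bk : ℂ) * ks z ^ k)
      (btil.sum fun k bk => (bk : ℂ) * ((k : ℂ) * (-1 / (C : ℂ)))) (-1) := by
    simp only [Finsupp.sum]
    apply HasDerivAt.fun_sum
    intro k _
    have := (hks.pow k).const_mul ((btil k : ℝ) : ℂ)
    simpa [hksval] using this
  have hS1val : (b.sum fun k bk => (bk : ℂ) * ks (-1) ^ k) = b.sum fun _ bk => (bk : ℂ) := by
    simp [Finsupp.sum, hksval]
  have hS2val : (btil.sum fun k bk => (bk : ℂ) * ks (-1) ^ k)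
      = btil.sum fun _ bk => (bk : ℂ) := by
    simp [Finsupp.sum, hksval]
  -- derivative of h at -1
  have hz2 : HasDerivAt (fun z : ℂ => z ^ 2) (-2 : ℂ) (-1) := by
    have := hasDerivAt_pow 2 (-1 : ℂ)
    refine this.congr_deriv ?_; push_cast; ring
  have hterm2 : HasDerivAt (fun z => z * (b.sum fun k bk => (bk : ℂ) * ks z ^ k))
      ((b.sum fun _ bk => (bk : ℂ))
        + (-1) * (b.sum fun k bk => (bk : ℂ) * ((k : ℂ) * (-1 / (C : ℂ))))) (-1) := by
    have := (hasDerivAt_id (-1 : ℂ)).fun_mul hS1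
    simpa [hS1val] using this
  have hh : HasDerivAt h
      (-2 - ((b.sum fun _ bk => (bk : ℂ))
        + (-1) * (b.sum fun k bk => (bk : ℂ) * ((k : ℂ) * (-1 / (C : ℂ)))))
        - (btil.sum fun k bk => (bk : ℂ) * ((k : ℂ) * (-1 / (C : ℂ))))) (-1) :=
    (hz2.sub hterm2).sub hS2
  refine ⟨?_, ?_, ?_⟩
  · -- eventual differentiability
    have hopen : IsOpen {z : ℂ |
        (z ^ 4 + 2 * (2 * (C : ℂ) ^ 2 - 1) * z ^ 2 + 1) ∈ Complex.slitPlane ∧ z ≠ 0} := by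
      rw [Set.setOf_and]
      exact (Complex.isOpen_slitPlane.preimage (by fun_prop)).inter isOpen_ne
    have hmem : (-1 : ℂ) ∈ {z : ℂ |
        (z ^ 4 + 2 * (2 * (C : ℂ) ^ 2 - 1) * z ^ 2 + 1) ∈ Complex.slitPlane ∧ z ≠ 0} :=
      ⟨hslit, by norm_num⟩
    filter_upwards [hopen.mem_nhds hmem] with z hz
    obtain ⟨hz1, hz2'⟩ := hz
    have hksz : DifferentiableAt ℂ ks z := by
      show DifferentiableAt ℂ (fun z : ℂ =>
        (1 - z ^ 2 + (z ^ 4 + 2 * (2 * (C : ℂ) ^ 2 - 1) * z ^ 2 + 1) ^ ((1 : ℂ) / 2)) /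
          (2 * (C : ℂ) * z)) z
      apply DifferentiableAt.div
      · exact (by fun_prop : DifferentiableAt ℂ (fun z : ℂ => 1 - z ^ 2) z).add
          (DifferentiableAt.cpow (by fun_prop) (differentiableAt_const _) hz1)
      · fun_prop
      · exact mul_ne_zero (mul_ne_zero two_ne_zero hCne) hz2'
    show DifferentiableAt ℂ (fun z =>
      z ^ 2 - z * (b.sum fun k bk => (bk : ℂ) * ks z ^ k)
        - (btil.sum fun k bk => (bk : ℂ) * ks z ^ k)) z
    have hsum : ∀ c : ℕ →₀ ℝ,
        DifferentiableAt ℂ (fun z => c.sum fun k bk => (bk : ℂ) * ks z ^ k) z := by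
      intro c
      simp only [Finsupp.sum]
      apply DifferentiableAt.fun_sum
      intro k _
      exact (hksz.pow k).const_mul _
    exact ((differentiableAt_id.pow 2).sub (differentiableAt_id.mul (hsum b))).sub (hsum btil)
  · -- value at -1
    show (-1 : ℂ) ^ 2 - (-1) * (b.sum fun k bk => (bk : ℂ) * ks (-1) ^ k)
        - (btil.sum fun k bk => (bk : ℂ) * ks (-1) ^ k) = _
    rw [hS1val, hS2val]; ring
  · rw [hh.deriv]
    have e1 : (b.sum fun k bk => (bk : ℂ) * ((k : ℂ) * (-1 / (C : ℂ))))
        = (-1 / (C : ℂ)) * (b.sum fun k bk => (k : ℂ) * bk) := by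
      rw [Finsupp.sum, Finsupp.sum, Finset.mul_sum]
      exact Finset.sum_congr rfl fun k _ => by ring
    have e2 : (btil.sum fun k bk => (bk : ℂ) * ((k : ℂ) * (-1 / (C : ℂ))))
        = (-1 / (C : ℂ)) * (btil.sum fun k bk => (k : ℂ) * bk) := by
      rw [Finsupp.sum, Finsupp.sum, Finset.mul_sum]
      exact Finset.sum_congr rfl fun k _ => by ring
    rw [e1, e2]
    field_simp
    ring
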